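/- Consider any broadcasted party-list election E = (N, C, k, l, A, L) with parties P_1, …, P_g whose popularities are strictly decreasing (n_1 > n_2 > … > n_g), in which every party has at least l candidates (|P_i| ≥ l for all i) and the parties jointly have at least k candidates (Σ_{i=1}^g |P_i| ≥ k). Let s be the least integer t with Σ_{i=1}^{t} |P_i| ≥ k. If min(⌈k/l⌉, g) > s, then IMP_CC(E) > 1, i.e., every winning committee of LV has strictly larger CC-score than every winning committee of AV. -/

import Mathlib

open Finset

/-- An election `E = (N, C, k, l, A, L)`: voters form the finite type `V`,
candidates the finite type `C`, `k` is the committee size, `l` the ballot limit,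
`A i` is the approval set of voter `i` and `L i` their ballot. -/
structure Election (V C : Type*) [Fintype V] [DecidableEq V] [Fintype C] [DecidableEq C] where
  k : ℕ
  l : ℕ
  A : V → Finset C
  L : V → Finset C
  k_le_card : k ≤ Fintype.card C
  one_le_l : 1 ≤ l
  l_le_k : l ≤ k
  ballot_card : ∀ i, (L i).card = l
  ballot_sub_approval : ∀ i, l ≤ (A i).card → L i ⊆ A i
  approval_ssub_ballot : ∀ i, (A i).card < l → A i ⊂ L i

variable {V C : Type*} [Fintype V] [DecidableEq V] [Fintype C] [DecidableEq C]

/-- The LV-score of a candidate: the number of voters whose ballot contains it. -/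
def sLVc (E : Election V C) (c : C) : ℕ := (univ.filter fun i => c ∈ E.L i).card

/-- The AV-score of a candidate: the number of voters approving it. -/
def sAVc (E : Election V C) (c : C) : ℕ := (univ.filter fun i => c ∈ E.A i).card

/-- The LV-score of a committee. -/
def sLV (E : Election V C) (W : Finset C) : ℕ := ∑ c ∈ W, sLVc E c

/-- The AV-score of a committee. -/
def sAV (E : Election V C) (W : Finset C) : ℕ := ∑ c ∈ W, sAVc E c

/-- The winning committees of Limited Voting: size-`k` committees maximizing the LV-score. -/
def LVwin (E : Election V C) : Set (Finset C) :=
  {W | W.card = E.k ∧ ∀ W' : Finset C, W'.card = E.k → sLV E W' ≤ sLV E W}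

/-- The winning committees of Approval Voting: size-`k` committees maximizing the AV-score. -/
def AVwin (E : Election V C) : Set (Finset C) :=
  {W | W.card = E.k ∧ ∀ W' : Finset C, W'.card = E.k → sAV E W' ≤ sAV E W}

/-- The Chamberlin–Courant score of a committee: the number of represented voters. -/
def sCC (E : Election V C) (W : Finset C) : ℕ :=
  (univ.filter fun i => (W ∩ E.A i).Nonempty).card

/-- `A` is a party-list profile: approval sets are nonempty and pairwise equal or disjoint. -/
def PartyList (E : Election V C) : Prop :=
  (∀ i, (E.A i).Nonempty) ∧ ∀ i j : V, E.A i = E.A j ∨ E.A i ∩ E.A j = ∅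

/-- `E` is consistent with some broadcasting (linear) order on candidates, encoded by an
injective priority function `f` (`f c < f c'` meaning `c ≻ c'`). -/
def Broadcasted (E : Election V C) : Prop :=
  ∃ f : C → ℕ, Function.Injective f ∧
    ∀ (i : V) (c c' : C), c ∈ E.A i → c' ∈ E.A i → c ∈ E.L i → c' ∉ E.L i → f c < f c'

/-- The number of voters of party `Pj`. -/
def nParty (E : Election V C) (Pj : Finset C) : ℕ := (univ.filter fun i => E.A i = Pj).card


section AuxSwap
variable {C : Type*} [DecidableEq C]

lemma swap_sum (f : C → ℕ) (W : Finset C) (c c' : C)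
    (hc : c ∈ W) (hc' : c' ∉ W) :
    f c + ∑ x ∈ insert c' (W.erase c), f x = f c' + ∑ x ∈ W, f x := by
  rw [Finset.sum_insert (fun h => hc' (Finset.mem_of_mem_erase h)),
      ← Finset.add_sum_erase _ f hc]
  ring

lemma swap_card (W : Finset C) (c c' : C) (hc : c ∈ W) (hc' : c' ∉ W) :
    (insert c' (W.erase c)).card = W.card := by
  rw [Finset.card_insert_of_notMem (fun h => hc' (Finset.mem_of_mem_erase h)),
      Finset.card_erase_of_mem hc]
  have := Finset.card_pos.mpr ⟨c, hc⟩
  omega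

end AuxSwap

/-- In a broadcasted party-list election as in Statement 2, if
`min(⌈k/l⌉, g) > s` then `IMP_CC(E) > 1`, i.e. every LV-winning committee has strictly
larger CC-score than every AV-winning committee. -/
theorem stmt3 (E : Election V C) (hPL : PartyList E) (hB : Broadcasted E)
    (g : ℕ) (P : Fin g → Finset C)
    (hPall : ∀ i : V, ∃ j, E.A i = P j)
    (hPrep : ∀ j, ∃ i : V, E.A i = P j)
    (hanti : ∀ j j' : Fin g, j < j' → nParty E (P j') < nParty E (P j))
    (hPl : ∀ j, E.l ≤ (P j).card)
    (hPk : E.k ≤ ∑ j : Fin g, (P j).card)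
    (s : ℕ)
    (hs : E.k ≤ ∑ j ∈ univ.filter (fun j : Fin g => (j : ℕ) < s), (P j).card)
    (hsleast : ∀ t : ℕ,
      E.k ≤ ∑ j ∈ univ.filter (fun j : Fin g => (j : ℕ) < t), (P j).card → s ≤ t)
    (hgt : s < min ((E.k + E.l - 1) / E.l) g) :
    (1 : ℚ) < ((sInf (sCC E '' LVwin E) : ℕ) : ℚ) / ((sSup (sCC E '' AVwin E) : ℕ) : ℚ) ∧
      ∀ W ∈ LVwin E, ∀ W' ∈ AVwin E, sCC E W' < sCC E W := by
  classical
  obtain ⟨f, hfinj, hf⟩ := hB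
  have hl := E.one_le_l
  have hlk := E.l_le_k
  set nP : Fin g → ℕ := fun j => nParty E (P j) with hnPdef
  -- positivity of party sizes
  have hnpos : ∀ j, 1 ≤ nP j := by
    intro j
    obtain ⟨i, hi⟩ := hPrep j
    exact Finset.card_pos.mpr ⟨i, by simp [nP, nParty, hi]⟩
  have hantiP : ∀ j j' : Fin g, j < j' → nP j' < nP j := hanti
  have hanti' : ∀ j j' : Fin g, j ≤ j' → nP j' ≤ nP j := by
    intro j j' hle
    rcases eq_or_lt_of_le hle with h | h
    · rw [h]
    · exact le_of_lt (hantiP j j' h)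
  -- P is injective
  have hPinj : ∀ j j' : Fin g, P j = P j' → j = j' := by
    intro j j' h
    by_contra hne
    rcases lt_or_gt_of_ne hne with h1 | h1
    · have h2 := hanti j j' h1
      rw [h] at h2; exact lt_irrefl _ h2
    · have h2 := hanti j' j h1
      rw [h] at h2; exact lt_irrefl _ h2
  -- parties are disjoint
  have hPdisj : ∀ j j' : Fin g, j ≠ j' → Disjoint (P j) (P j') := by
    intro j j' hne
    obtain ⟨i, hi⟩ := hPrep j
    obtain ⟨i', hi'⟩ := hPrep j'
    rcases hPL.2 i i' with h | h
    · rw [hi, hi'] at h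
      exact absurd (hPinj j j' h) hne
    · rw [hi, hi'] at h
      exact Finset.disjoint_iff_inter_eq_empty.mpr h
  -- same party ⇒ same ballot
  have hlA : ∀ i : V, E.l ≤ (E.A i).card := by
    intro i
    obtain ⟨j, hj⟩ := hPall i
    rw [hj]; exact hPl j
  have hLA : ∀ i : V, E.L i ⊆ E.A i := fun i => E.ballot_sub_approval i (hlA i)
  have hsameL : ∀ i i' : V, E.A i = E.A i' → E.L i = E.L i' := by
    intro i i' hA
    by_contra hne
    have hcard : (E.L i).card = (E.L i').card := by rw [E.ballot_card, E.ballot_card]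
    have h1 : (E.L i \ E.L i').Nonempty := by
      rw [Finset.sdiff_nonempty]
      intro hsub
      exact hne (Finset.eq_of_subset_of_card_le hsub (le_of_eq hcard.symm))
    have h2 : (E.L i' \ E.L i).Nonempty := by
      rw [Finset.sdiff_nonempty]
      intro hsub
      exact hne (Finset.eq_of_subset_of_card_le hsub (le_of_eq hcard)).symm
    obtain ⟨c, hc⟩ := h1
    obtain ⟨c', hc'⟩ := h2
    rw [Finset.mem_sdiff] at hc hc'
    have hca : c ∈ E.A i := hLA i hc.1
    have hc'a : c' ∈ E.A i := by rw [hA]; exact hLA i' hc'.1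
    have e1 := hf i c c' hca hc'a hc.1 hc'.2
    have e2 := hf i' c' c (by rw [← hA]; exact hc'a) (by rw [← hA]; exact hca) hc'.1 hc.2
    omega
  -- the common ballot of each party
  choose rep hrep using hPrep
  set T : Fin g → Finset C := fun j => E.L (rep j) with hTdef
  have hTball : ∀ (j : Fin g) (i : V), E.A i = P j → E.L i = T j := by
    intro j i h
    exact hsameL i (rep j) (by rw [h, hrep j])
  have hTsub : ∀ j, T j ⊆ P j := by
    intro j
    have := hLA (rep j)
    rwa [hrep j] at this
  have hTcard : ∀ j, (T j).card = E.l := fun j => E.ballot_card (rep j)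
  have hTdisj : ∀ j j' : Fin g, j ≠ j' → Disjoint (T j) (T j') := by
    intro j j' hne
    exact Finset.disjoint_of_subset_left (hTsub j)
      (Finset.disjoint_of_subset_right (hTsub j') (hPdisj j j' hne))
  -- score formulas
  have hsAV_mem : ∀ (j : Fin g) (c : C), c ∈ P j → sAVc E c = nP j := by
    intro j c hc
    show _ = nParty E (P j)
    unfold sAVc nParty
    congr 1
    ext i
    simp only [Finset.mem_filter, Finset.mem_univ, true_and]
    constructor
    · intro h
      obtain ⟨j', hj'⟩ := hPall i
      rw [hj'] at h ⊢
      by_contra hne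
      have hjj : j' ≠ j := fun he => hne (by rw [he])
      exact (Finset.disjoint_left.mp (hPdisj j' j hjj) h) hc
    · intro h
      rw [h]; exact hc
  have hsAV_zero : ∀ c : C, (∀ j, c ∉ P j) → sAVc E c = 0 := by
    intro c hc
    unfold sAVc
    rw [Finset.card_eq_zero, Finset.filter_eq_empty_iff]
    intro i _
    obtain ⟨j, hj⟩ := hPall i
    rw [hj]
    exact hc j
  have hsLV_mem : ∀ (j : Fin g) (c : C), c ∈ T j → sLVc E c = nP j := by
    intro j c hc
    show _ = nParty E (P j)
    unfold sLVc nParty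
    congr 1
    ext i
    simp only [Finset.mem_filter, Finset.mem_univ, true_and]
    constructor
    · intro h
      obtain ⟨j', hj'⟩ := hPall i
      rw [hTball j' i hj'] at h
      rw [hj']
      by_contra hne
      have hjj : j' ≠ j := fun he => hne (by rw [he])
      exact (Finset.disjoint_left.mp (hTdisj j' j hjj) h) hc
    · intro h
      rw [hTball j i h]; exact hc
  have hsLV_zero : ∀ c : C, (∀ j, c ∉ T j) → sLVc E c = 0 := by
    intro c hc
    unfold sLVc
    rw [Finset.card_eq_zero, Finset.filter_eq_empty_iff]
    intro i _
    obtain ⟨j, hj⟩ := hPall i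
    rw [hTball j i hj]
    exact hc j
  -- counting lemma
  have hcount : ∀ S : Finset (Fin g),
      ∑ j ∈ S, nP j = (S.biUnion (fun j => univ.filter fun i => E.A i = P j)).card := by
    intro S
    rw [Finset.card_biUnion]
    · rfl
    · intro x _ y _ hxy
      rw [Function.onFun, Finset.disjoint_left]
      intro i hi hi'
      rw [Finset.mem_filter] at hi hi'
      exact hxy (hPinj x y (hi.2 ▸ hi'.2 ▸ rfl))
  -- CC bounds
  have hCC_lower : ∀ (W : Finset C) (S : Finset (Fin g)),
      (∀ j ∈ S, (W ∩ P j).Nonempty) → ∑ j ∈ S, nP j ≤ sCC E W := by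
    intro W S hS
    rw [hcount]
    apply Finset.card_le_card
    intro i hi
    rw [Finset.mem_biUnion] at hi
    obtain ⟨j, hj, hij⟩ := hi
    rw [Finset.mem_filter] at hij
    rw [Finset.mem_filter]
    refine ⟨mem_univ i, ?_⟩
    rw [hij.2]
    exact hS j hj
  have hCC_upper : ∀ (W : Finset C) (S : Finset (Fin g)),
      (∀ i : V, (W ∩ E.A i).Nonempty → ∃ j ∈ S, E.A i = P j) → sCC E W ≤ ∑ j ∈ S, nP j := by
    intro W S hS
    rw [hcount]
    apply Finset.card_le_card
    intro i hi
    rw [Finset.mem_filter] at hi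
    obtain ⟨j, hj, hij⟩ := hS i hi.2
    rw [Finset.mem_biUnion]
    exact ⟨j, hj, by rw [Finset.mem_filter]; exact ⟨mem_univ i, hij⟩⟩
  -- basic facts about s
  have hgtm : s + 1 ≤ (E.k + E.l - 1) / E.l := by omega
  have hsg : s < g := by omega
  have hs1 : 1 ≤ s := by
    by_contra h
    have hs0 : s = 0 := by omega
    rw [hs0] at hs
    simp only [Nat.not_lt_zero, Finset.filter_false, Finset.sum_empty] at hs
    omega
  set sF : Fin g := ⟨s - 1, by omega⟩ with hsFdef
  set sG : Fin g := ⟨s, hsg⟩ with hsGdef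
  -- the union of the first s parties
  set U : Finset C := (univ.filter fun j : Fin g => (j : ℕ) < s).biUnion P with hUdef
  have hUcard : E.k ≤ U.card := by
    rw [hUdef, Finset.card_biUnion]
    · exact hs
    · intro x _ y _ hxy
      exact hPdisj x y hxy
  -- every AV winner is included in U
  have hAVsub : ∀ W' ∈ AVwin E, W' ⊆ U := by
    intro W' hW'
    by_contra hns
    obtain ⟨c, hcW, hcU⟩ := Finset.not_subset.mp hns
    have hcscore : sAVc E c < nP sF := by
      by_cases hc2 : ∃ j, c ∈ P j
      · obtain ⟨j, hj⟩ := hc2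
        have hjs : ¬ (j : ℕ) < s := by
          intro h
          exact hcU (Finset.mem_biUnion.mpr ⟨j, by simp [h], hj⟩)
        rw [hsAV_mem j c hj]
        exact hantiP sF j (by simp only [hsFdef, Fin.lt_def]; omega)
      · push_neg at hc2
        rw [hsAV_zero c hc2]
        exact hnpos sF
    have hUne : (U \ W').Nonempty := by
      rw [Finset.sdiff_nonempty]
      intro hsub
      have hss : U ⊂ W' := Finset.ssubset_iff_of_subset hsub |>.mpr ⟨c, hcW, hcU⟩
      have := Finset.card_lt_card hss
      rw [hW'.1] at this
      omega
    obtain ⟨c', hc'⟩ := hUne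
    rw [Finset.mem_sdiff] at hc'
    have hc'score : nP sF ≤ sAVc E c' := by
      obtain ⟨j, hjmem, hj⟩ := Finset.mem_biUnion.mp hc'.1
      rw [Finset.mem_filter] at hjmem
      rw [hsAV_mem j c' hj]
      exact hanti' j sF (by simp only [hsFdef, Fin.le_def]; omega)
    have hk1 : (insert c' (W'.erase c)).card = E.k := by
      rw [swap_card W' c c' hcW hc'.2, hW'.1]
    have hle := hW'.2 _ hk1
    have heq := swap_sum (sAVc E) W' c c' hcW hc'.2
    unfold sAV at hle
    omega
  -- every LV winner covers the top s+1 parties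
  have hLVcover : ∀ W ∈ LVwin E, ∀ j : Fin g, (j : ℕ) ≤ s → (W ∩ T j).Nonempty := by
    intro W hW j hj
    by_contra hemp
    rw [Finset.not_nonempty_iff_eq_empty] at hemp
    -- j * l < k
    have hjl : (j : ℕ) * E.l < E.k := by
      have h1 : (j : ℕ) + 1 ≤ (E.k + E.l - 1) / E.l := le_trans (by omega) hgtm
      have h2 := (Nat.le_div_iff_mul_le (by omega : 0 < E.l)).mp h1
      have h3 : ((j : ℕ) + 1) * E.l = (j : ℕ) * E.l + E.l := by ring
      omega
    -- there is a low-scoring member of W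
    have hlow : ∃ c ∈ W, sLVc E c < nP j := by
      by_contra h
      push_neg at h
      have hsub : W ⊆ (univ.filter fun j' : Fin g => j' < j).biUnion T := by
        intro c hc
        have hge := h c hc
        have hpos : 0 < sLVc E c := lt_of_lt_of_le (hnpos j) hge
        have hcT : ∃ j', c ∈ T j' := by
          by_contra h2
          push_neg at h2
          rw [hsLV_zero c h2] at hpos
          omega
        obtain ⟨j', hj'⟩ := hcT
        rw [hsLV_mem j' c hj'] at hge
        have hne : j' ≠ j := by
          intro he
          rw [he] at hj'
          have : c ∈ W ∩ T j := Finset.mem_inter.mpr ⟨hc, hj'⟩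
          rw [hemp] at this
          exact absurd this (Finset.notMem_empty c)
        have hlt : j' < j := by
          rcases lt_or_gt_of_ne hne with h3 | h3
          · exact h3
          · exact absurd (hantiP j j' h3) (by omega)
        exact Finset.mem_biUnion.mpr ⟨j', by simp [hlt], hj'⟩
      have hc1 : ((univ.filter fun j' : Fin g => j' < j).biUnion T).card ≤ (j : ℕ) * E.l := by
        rw [Finset.card_biUnion (fun x _ y _ hxy => hTdisj x y hxy)]
        have hcf : (univ.filter fun j' : Fin g => j' < j).card ≤ (j : ℕ) := by
          have hmap : ∀ a ∈ univ.filter fun j' : Fin g => j' < j,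
              (fun x : Fin g => (x : ℕ)) a ∈ Finset.range (j : ℕ) := by
            intro a ha
            rw [Finset.mem_filter] at ha
            rw [Finset.mem_range]
            exact ha.2
          have := Finset.card_le_card_of_injOn (fun x : Fin g => (x : ℕ)) hmap
            (fun a _ b _ hab => Fin.val_injective hab)
          simpa [Finset.card_range] using this
        calc ∑ u ∈ univ.filter fun j' : Fin g => j' < j, (T u).card
            = ∑ u ∈ univ.filter fun j' : Fin g => j' < j, E.l := by
              apply Finset.sum_congr rfl
              intro u _
              exact hTcard u
          _ = (univ.filter fun j' : Fin g => j' < j).card * E.l := by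
              rw [Finset.sum_const, smul_eq_mul]
          _ ≤ (j : ℕ) * E.l := Nat.mul_le_mul_right _ hcf
      have := Finset.card_le_card hsub
      rw [hW.1] at this
      omega
    obtain ⟨c, hcW, hclow⟩ := hlow
    have hTne : (T j).Nonempty := by
      rw [← Finset.card_pos, hTcard j]
      omega
    obtain ⟨c', hc'T⟩ := hTne
    have hc'W : c' ∉ W := by
      intro h
      have : c' ∈ W ∩ T j := Finset.mem_inter.mpr ⟨h, hc'T⟩
      rw [hemp] at this
      exact absurd this (Finset.notMem_empty c')
    have hc'score : sLVc E c' = nP j := hsLV_mem j c' hc'T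
    have hk1 : (insert c' (W.erase c)).card = E.k := by
      rw [swap_card W c c' hcW hc'W, hW.1]
    have hle := hW.2 _ hk1
    have heq := swap_sum (sLVc E) W c c' hcW hc'W
    unfold sLV at hle
    omega
  -- AV upper bound
  have hAVupper : ∀ W' ∈ AVwin E,
      sCC E W' ≤ ∑ j ∈ univ.filter (fun j : Fin g => (j : ℕ) < s), nP j := by
    intro W' hW'
    apply hCC_upper
    intro i hi
    obtain ⟨c, hc⟩ := hi
    rw [Finset.mem_inter] at hc
    obtain ⟨j', hj'⟩ := hPall i
    have hcU : c ∈ U := hAVsub W' hW' hc.1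
    obtain ⟨j, hjmem, hj⟩ := Finset.mem_biUnion.mp hcU
    rw [Finset.mem_filter] at hjmem
    have hcP : c ∈ P j' := by rw [← hj']; exact hc.2
    have : j = j' := by
      by_contra hne
      exact (Finset.disjoint_left.mp (hPdisj j j' hne) hj) hcP
    refine ⟨j', ?_, hj'⟩
    rw [Finset.mem_filter]
    exact ⟨mem_univ j', by rw [← this]; exact hjmem.2⟩
  -- LV lower bound
  have hLVlower : ∀ W ∈ LVwin E,
      ∑ j ∈ univ.filter (fun j : Fin g => (j : ℕ) < s + 1), nP j ≤ sCC E W := by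
    intro W hW
    apply hCC_lower
    intro j hj
    rw [Finset.mem_filter] at hj
    obtain ⟨c, hc⟩ := hLVcover W hW j (by omega)
    rw [Finset.mem_inter] at hc
    exact ⟨c, Finset.mem_inter.mpr ⟨hc.1, hTsub j hc.2⟩⟩
  -- strict comparison of sums
  have hsums : ∑ j ∈ univ.filter (fun j : Fin g => (j : ℕ) < s), nP j <
      ∑ j ∈ univ.filter (fun j : Fin g => (j : ℕ) < s + 1), nP j := by
    have hins : (univ.filter fun j : Fin g => (j : ℕ) < s + 1) =
        insert sG (univ.filter fun j : Fin g => (j : ℕ) < s) := by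
      ext x
      simp only [Finset.mem_filter, Finset.mem_univ, true_and, Finset.mem_insert]
      constructor
      · intro h
        by_cases hx : x = sG
        · exact Or.inl hx
        · right
          have : (x : ℕ) ≠ s := fun he => hx (Fin.ext he)
          omega
      · intro h
        rcases h with h | h
        · rw [h]; simp [hsGdef]
        · omega
    rw [hins, Finset.sum_insert (by simp [hsGdef])]
    have := hnpos sG
    omega
  -- the main strict inequality
  have hmain : ∀ W ∈ LVwin E, ∀ W' ∈ AVwin E, sCC E W' < sCC E W := by
    intro W hW W' hW'
    calc sCC E W' ≤ _ := hAVupper W' hW'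
      _ < _ := hsums
      _ ≤ sCC E W := hLVlower W hW
  refine ⟨?_, hmain⟩
  -- existence of winners
  have hex : ∀ sc : Finset C → ℕ, ∃ W : Finset C, W.card = E.k ∧
      ∀ W' : Finset C, W'.card = E.k → sc W' ≤ sc W := by
    intro sc
    have hne : ((univ : Finset C).powersetCard E.k).Nonempty := by
      rw [Finset.powersetCard_nonempty, Finset.card_univ]
      exact E.k_le_card
    obtain ⟨W, hWmem, hWmax⟩ := Finset.exists_max_image _ sc hne
    rw [Finset.mem_powersetCard_univ] at hWmem
    exact ⟨W, hWmem, fun W' h' => hWmax W' (Finset.mem_powersetCard_univ.mpr h')⟩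
  obtain ⟨WL, hWL⟩ := hex (sLV E)
  obtain ⟨WA, hWA⟩ := hex (sAV E)
  have hWLwin : WL ∈ LVwin E := hWL
  have hWAwin : WA ∈ AVwin E := hWA
  have hLVne : (sCC E '' LVwin E).Nonempty := ⟨sCC E WL, WL, hWLwin, rfl⟩
  have hAVne : (sCC E '' AVwin E).Nonempty := ⟨sCC E WA, WA, hWAwin, rfl⟩
  have hAVbdd : BddAbove (sCC E '' AVwin E) := by
    refine ⟨Fintype.card V, ?_⟩
    rintro x ⟨W, _, rfl⟩
    exact le_trans (Finset.card_filter_le _ _) (le_of_eq (Finset.card_univ))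
  obtain ⟨W1, hW1win, hW1⟩ := Nat.sInf_mem hLVne
  obtain ⟨W2, hW2win, hW2⟩ := Nat.sSup_mem hAVne hAVbdd
  have hblt : sCC E W2 < sCC E W1 := hmain W1 hW1win W2 hW2win
  have hbpos : 1 ≤ sCC E W2 := by
    have hWne : W2.Nonempty := by
      rw [← Finset.card_pos, hW2win.1]
      omega
    obtain ⟨c, hc⟩ := hWne
    have hcU : c ∈ U := hAVsub W2 hW2win hc
    obtain ⟨j, _, hj⟩ := Finset.mem_biUnion.mp hcU
    apply Finset.card_pos.mpr
    refine ⟨rep j, ?_⟩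
    rw [Finset.mem_filter]
    refine ⟨mem_univ _, ⟨c, ?_⟩⟩
    rw [Finset.mem_inter, hrep j]
    exact ⟨hc, hj⟩
  rw [← hW1, ← hW2] at *
  rw [one_lt_div (by exact_mod_cast hbpos : (0:ℚ) < _)]
  exact_mod_cast hblt
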